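/- (Lemma 1, part 2, existence form.) There exist γ₀ > 0, λ > 0 and μ₀ > 0, with μ₀ λ ≤ 1, such that for every γ ∈ [0, γ₀] the matrix B + γC is invertible and for every μ with 0 < μ ≤ μ₀ one has ‖I − μ (B + γC)⁻¹ A‖₂ ≤ 1 − μλ < 1. -/

import Mathlib

set_option maxHeartbeats 4000000
set_option synthInstance.maxHeartbeats 400000

open Matrix

/-- The Euclidean norm of a vector. -/
noncomputable def euclNorm {ι : Type*} [Fintype ι] (v : ι → ℝ) : ℝ :=
  Real.sqrt (∑ i, (v i) ^ 2)

/-- The matrix norm induced by the Euclidean (ℓ²) vector norm. -/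
noncomputable def l2OpNorm {n : ℕ} (P : Matrix (Fin n) (Fin n) ℝ) : ℝ :=
  ‖(Matrix.toEuclideanCLM (𝕜 := ℝ) P)‖

section Aux

variable {M : ℕ}

lemma aux_inner_toEuclideanCLM (P : Matrix (Fin M) (Fin M) ℝ) (x : EuclideanSpace ℝ (Fin M)) :
    (inner ℝ x (toEuclideanCLM (𝕜 := ℝ) P x) : ℝ)
      = (WithLp.equiv 2 _ x) ⬝ᵥ P.mulVec (WithLp.equiv 2 _ x) := by
  have h : toEuclideanCLM (𝕜 := ℝ) P x
      = (WithLp.equiv 2 _).symm (P.mulVec (WithLp.equiv 2 _ x)) := by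
    apply (WithLp.equiv 2 _).injective
    simp [Matrix.ofLp_toEuclideanCLM, Matrix.toLin'_apply]
  rw [h]
  simp only [PiLp.inner_apply, RCLike.inner_apply, dotProduct, starRingEnd_apply, star_trivial]
  exact Finset.sum_congr rfl (fun i _ => mul_comm _ _)

lemma aux_euclNorm_eq (x : EuclideanSpace ℝ (Fin M)) : euclNorm (WithLp.equiv 2 _ x) = ‖x‖ := by
  rw [EuclideanSpace.norm_eq, euclNorm]
  congr 1
  apply Finset.sum_congr rfl
  intro i _
  rw [Real.norm_eq_abs, sq_abs]
  rfl

lemma aux_ring_inverse_map (X : Matrix (Fin M) (Fin M) ℝ) (hX : IsUnit X) :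
    Ring.inverse (toEuclideanCLM (𝕜 := ℝ) X) = toEuclideanCLM (𝕜 := ℝ) (X⁻¹) := by
  have hdet : IsUnit X.det := (Matrix.isUnit_iff_isUnit_det X).mp hX
  have h1 : X * X⁻¹ = 1 := Matrix.mul_nonsing_inv X hdet
  have hu : IsUnit (toEuclideanCLM (𝕜 := ℝ) X) := hX.map _
  calc Ring.inverse (toEuclideanCLM (𝕜 := ℝ) X)
      = Ring.inverse (toEuclideanCLM (𝕜 := ℝ) X)
        * (toEuclideanCLM (𝕜 := ℝ) X * toEuclideanCLM (𝕜 := ℝ) X⁻¹) := by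
        rw [← _root_.map_mul, h1, _root_.map_one, mul_one]
    _ = toEuclideanCLM (𝕜 := ℝ) X⁻¹ := by
        rw [← mul_assoc, Ring.inverse_mul_cancel _ hu, one_mul]

/-- Key norm estimate. -/
lemma aux_key_bound {E : Type*} [NormedAddCommGroup E] [InnerProductSpace ℝ E]
    (T : E →L[ℝ] E) (ε K μ : ℝ) (hε : 0 < ε) (hεK : ε ≤ K)
    (hTK : ‖T‖ ≤ K) (hpos : ∀ x : E, ε * ‖x‖ ^ 2 ≤ inner ℝ x (T x))
    (hμ : 0 < μ) (hμ₀ : μ ≤ ε / K ^ 2) :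
    ‖1 - μ • T‖ ≤ 1 - μ * (ε / 2) := by
  have hK : 0 < K := lt_of_lt_of_le hε hεK
  have hμK : μ * K ^ 2 ≤ ε := by
    rw [div_eq_mul_inv] at hμ₀
    have := mul_le_mul_of_nonneg_right hμ₀ (le_of_lt (by positivity : (0:ℝ) < K ^ 2))
    calc μ * K ^ 2 ≤ ε * (K ^ 2)⁻¹ * K ^ 2 := this
      _ = ε := by field_simp
  have hbound : 0 ≤ 1 - μ * (ε / 2) := by nlinarith
  refine ContinuousLinearMap.opNorm_le_bound _ hbound (fun x => ?_)
  have happ : (1 - μ • T) x = x - μ • T x := by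
    simp [ContinuousLinearMap.sub_apply]
  have hx2 : ‖(1 - μ • T) x‖ ^ 2 ≤ ((1 - μ * (ε / 2)) * ‖x‖) ^ 2 := by
    rw [happ, norm_sub_sq_real, real_inner_smul_right, norm_smul, Real.norm_eq_abs,
      abs_of_pos hμ]
    have h1 : ε * ‖x‖ ^ 2 ≤ inner ℝ x (T x) := hpos x
    have h2 : ‖T x‖ ≤ K * ‖x‖ := le_trans (T.le_opNorm x)
      (mul_le_mul_of_nonneg_right hTK (norm_nonneg x))
    have e1 : μ * (ε * ‖x‖ ^ 2) ≤ μ * inner ℝ x (T x) := mul_le_mul_of_nonneg_left h1 hμ.le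
    have e2 : ‖T x‖ ^ 2 ≤ (K * ‖x‖) ^ 2 := by nlinarith [norm_nonneg (T x), norm_nonneg x]
    have e3 : μ ^ 2 * (K ^ 2 * ‖x‖ ^ 2) ≤ μ * (ε * ‖x‖ ^ 2) := by
      nlinarith [mul_le_mul_of_nonneg_left hμK (mul_nonneg hμ.le (sq_nonneg ‖x‖))]
    nlinarith [e1, e3, mul_le_mul_of_nonneg_left e2 (sq_nonneg μ),
      sq_nonneg (μ * ε * ‖x‖), sq_nonneg ‖x‖]
  calc ‖(1 - μ • T) x‖ = Real.sqrt (‖(1 - μ • T) x‖ ^ 2) := (Real.sqrt_sq (norm_nonneg _)).symm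
    _ ≤ Real.sqrt (((1 - μ * (ε / 2)) * ‖x‖) ^ 2) := Real.sqrt_le_sqrt hx2
    _ = (1 - μ * (ε / 2)) * ‖x‖ := Real.sqrt_sq (mul_nonneg hbound (norm_nonneg x))

end Aux

/-- Lemma 1, part 2, existence form: there exist `γ₀ > 0`, `λ > 0`, `μ₀ > 0`
with `μ₀ λ ≤ 1` such that for all `γ ∈ [0, γ₀]`, `B + γC` is invertible and for all
`0 < μ ≤ μ₀`, `‖I − μ (B + γC)⁻¹ A‖₂ ≤ 1 − μλ < 1`. -/
theorem lemma1_part2_existence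
    {M : ℕ} (A B C : Matrix (Fin M) (Fin M) ℝ)
    (hA : A.PosDef)
    (hBsymm : B.IsSymm) (hBinv : IsUnit B)
    (hBA : ∀ x : Fin M → ℝ, euclNorm x = 1 → 0 < x ⬝ᵥ (B⁻¹ * A).mulVec x)
    (hC : C.PosSemidef) :
    ∃ γ₀ : ℝ, 0 < γ₀ ∧ ∃ lam : ℝ, 0 < lam ∧ ∃ μ₀ : ℝ, 0 < μ₀ ∧ μ₀ * lam ≤ 1 ∧
      ∀ γ : ℝ, 0 ≤ γ → γ ≤ γ₀ →
        IsUnit (B + γ • C) ∧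
        ∀ μ : ℝ, 0 < μ → μ ≤ μ₀ →
          l2OpNorm (1 - μ • ((B + γ • C)⁻¹ * A)) ≤ 1 - μ * lam ∧ 1 - μ * lam < 1 := by
  rcases Nat.eq_zero_or_pos M with hM | hM
  · -- trivial case M = 0
    subst hM
    refine ⟨1, one_pos, 1/2, by norm_num, 1, one_pos, by norm_num, fun γ _ _ => ?_⟩
    constructor
    · haveI : Subsingleton (Matrix (Fin 0) (Fin 0) ℝ) :=
        ⟨fun a b => Matrix.ext fun i _ => absurd i.2 (by omega)⟩
      exact isUnit_of_subsingleton _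
    intro μ hμ hμ1
    have hz : (toEuclideanCLM (𝕜 := ℝ) (1 - μ • ((B + γ • C)⁻¹ * A))) = 0 := by
      ext x i
      exact absurd i.2 (by omega)
    rw [l2OpNorm, hz, norm_zero]
    constructor <;> nlinarith
  -- main case
  haveI : Nonempty (Fin M) := ⟨⟨0, hM⟩⟩
  obtain ⟨b, hbdef⟩ : ∃ b' : EuclideanSpace ℝ (Fin M) →L[ℝ] EuclideanSpace ℝ (Fin M),
      b' = toEuclideanCLM (𝕜 := ℝ) B := ⟨_, rfl⟩
  obtain ⟨c, hcdef⟩ : ∃ c' : EuclideanSpace ℝ (Fin M) →L[ℝ] EuclideanSpace ℝ (Fin M),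
      c' = toEuclideanCLM (𝕜 := ℝ) C := ⟨_, rfl⟩
  obtain ⟨a, hadef⟩ : ∃ a' : EuclideanSpace ℝ (Fin M) →L[ℝ] EuclideanSpace ℝ (Fin M),
      a' = toEuclideanCLM (𝕜 := ℝ) A := ⟨_, rfl⟩
  have hb : IsUnit b := by rw [hbdef]; exact hBinv.map _
  obtain ⟨g, hgdef⟩ : ∃ g' : ℝ → (EuclideanSpace ℝ (Fin M) →L[ℝ] EuclideanSpace ℝ (Fin M)),
      g' = fun γ => Ring.inverse (b + γ • c) * a := ⟨_, rfl⟩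
  have h0bc : b + (0:ℝ) • c = b := by
    have e : (0:ℝ) • c = 0 := zero_smul ℝ c
    rw [e, add_zero]
  have hgapp : ∀ γ : ℝ, g γ = Ring.inverse (b + γ • c) * a := by
    intro γ; rw [hgdef]
  have hg0 : g 0 = toEuclideanCLM (𝕜 := ℝ) (B⁻¹ * A) := by
    rw [hgapp 0, h0bc, hbdef, aux_ring_inverse_map B hBinv, hadef, ← _root_.map_mul]
  -- positivity of the quadratic form of g 0
  obtain ⟨φ, hφdef⟩ : ∃ φ' : EuclideanSpace ℝ (Fin M) → ℝ,
      φ' = fun x => (inner ℝ x (g 0 x) : ℝ) := ⟨_, rfl⟩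
  have hφapp : ∀ x, φ x = (inner ℝ x (g 0 x) : ℝ) := by intro x; rw [hφdef]
  have hφcont : Continuous φ := by
    rw [hφdef]
    exact Continuous.inner continuous_id (g 0).continuous
  have hsph : IsCompact (Metric.sphere (0 : EuclideanSpace ℝ (Fin M)) 1) := isCompact_sphere _ _
  have hsphne : (Metric.sphere (0 : EuclideanSpace ℝ (Fin M)) 1).Nonempty :=
    NormedSpace.sphere_nonempty.mpr zero_le_one
  obtain ⟨x₀, hx₀s, hx₀min'⟩ := hsph.exists_isMinOn hsphne hφcont.continuousOn
  have hx₀min : ∀ u ∈ Metric.sphere (0 : EuclideanSpace ℝ (Fin M)) 1, φ x₀ ≤ φ u :=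
    isMinOn_iff.mp hx₀min'
  obtain ⟨δ, hδdef⟩ : ∃ δ' : ℝ, δ' = φ x₀ := ⟨_, rfl⟩
  have hφpos : ∀ x : EuclideanSpace ℝ (Fin M), ‖x‖ = 1 → 0 < φ x := by
    intro x hx
    have h1 : euclNorm (WithLp.equiv 2 _ x) = 1 := by rw [aux_euclNorm_eq, hx]
    have h2 := hBA _ h1
    rw [hφapp, hg0, aux_inner_toEuclideanCLM]
    exact h2
  have hδpos : 0 < δ := by
    rw [hδdef]
    exact hφpos x₀ (by simpa using mem_sphere_zero_iff_norm.mp hx₀s)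
  have hquad0 : ∀ x : EuclideanSpace ℝ (Fin M), δ * ‖x‖ ^ 2 ≤ inner ℝ x (g 0 x) := by
    intro x
    rcases eq_or_ne x 0 with rfl | hx
    · simp
    · have hnx : (0:ℝ) < ‖x‖ := norm_pos_iff.mpr hx
      have hu : ‖(‖x‖⁻¹ • x : EuclideanSpace ℝ (Fin M))‖ = 1 := norm_smul_inv_norm hx
      have hxu : x = ‖x‖ • (‖x‖⁻¹ • x) := by
        rw [smul_smul, mul_inv_cancel₀ (ne_of_gt hnx), one_smul]
      have h1 : δ ≤ φ (‖x‖⁻¹ • x) := by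
        rw [hδdef]
        exact hx₀min _ (mem_sphere_zero_iff_norm.mpr hu)
      rw [hφapp] at h1
      have h2 : (inner ℝ x (g 0 x) : ℝ) = ‖x‖ ^ 2 * inner ℝ (‖x‖⁻¹ • x) (g 0 (‖x‖⁻¹ • x)) := by
        conv_lhs => rw [hxu]
        have hsm : g 0 (‖x‖ • (‖x‖⁻¹ • x)) = ‖x‖ • g 0 (‖x‖⁻¹ • x) :=
          ContinuousLinearMap.map_smul _ _ _
        rw [hsm, real_inner_smul_left, real_inner_smul_right]
        ring
      rw [h2]
      nlinarith [sq_nonneg ‖x‖, h1]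
  -- continuity of g at 0 and openness of units
  obtain ⟨ε, hεdef⟩ : ∃ ε' : ℝ, ε' = δ / 2 := ⟨_, rfl⟩
  have hεpos : 0 < ε := by rw [hεdef]; exact half_pos hδpos
  have haffcont : Continuous (fun γ : ℝ => b + γ • c) := by continuity
  have hinvca : ContinuousAt Ring.inverse b := by
    have h := NormedRing.inverse_continuousAt hb.unit
    rwa [hb.unit_spec] at h
  have hgca : ContinuousAt g 0 := by
    rw [hgdef]
    have h1 : ContinuousAt (fun γ : ℝ => b + γ • c) 0 := haffcont.continuousAt
    have h2 : ContinuousAt Ring.inverse ((fun γ : ℝ => b + γ • c) 0) := by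
      have e : (fun γ : ℝ => b + γ • c) 0 = b := h0bc
      rw [e]; exact hinvca
    exact (ContinuousAt.comp (x := (0:ℝ)) (g := Ring.inverse)
      (f := fun γ : ℝ => b + γ • c) h2 h1).mul continuousAt_const
  obtain ⟨ru, hrupos, hruball⟩ := Metric.isOpen_iff.mp Units.isOpen b hb
  obtain ⟨d, hdpos, hd⟩ := Metric.continuousAt_iff.mp hgca ε hεpos
  obtain ⟨γ₀, hγ₀def⟩ : ∃ γ' : ℝ, γ' = min (d / 2) (ru / (2 * (‖c‖ + 1))) := ⟨_, rfl⟩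
  have hγ₀pos : 0 < γ₀ := by
    rw [hγ₀def]
    exact lt_min (half_pos hdpos) (div_pos hrupos (by positivity))
  have hγ₀le1 : γ₀ ≤ d / 2 := by rw [hγ₀def]; exact min_le_left _ _
  have hγ₀le2 : γ₀ ≤ ru / (2 * (‖c‖ + 1)) := by rw [hγ₀def]; exact min_le_right _ _
  -- constants
  obtain ⟨K, hKdef⟩ : ∃ K' : ℝ, K' = ‖g 0‖ + ε := ⟨_, rfl⟩
  have hεK : ε ≤ K := by
    have := norm_nonneg (g 0); rw [hKdef]; linarith
  have hKpos : 0 < K := lt_of_lt_of_le hεpos hεK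
  refine ⟨γ₀, hγ₀pos, ε / 2, half_pos hεpos, ε / K ^ 2, div_pos hεpos (pow_pos hKpos 2), ?_, ?_⟩
  · -- μ₀ * lam ≤ 1
    rw [div_mul_div_comm]
    rw [div_le_one (mul_pos (pow_pos hKpos 2) two_pos)]
    nlinarith [hεK, hεpos]
  intro γ hγ0 hγγ₀
  have hγd : γ ≤ d / 2 := le_trans hγγ₀ hγ₀le1
  have hγru : γ ≤ ru / (2 * (‖c‖ + 1)) := le_trans hγγ₀ hγ₀le2
  have hunit : IsUnit (b + γ • c) := by
    apply hruball
    rw [Metric.mem_ball, dist_eq_norm]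
    have h1 : b + γ • c - b = γ • c := by abel
    have h4 : ‖γ • c‖ = ‖γ‖ * ‖c‖ := norm_smul γ c
    rw [h1, h4, Real.norm_eq_abs, abs_of_nonneg hγ0]
    have h2 : γ * ‖c‖ ≤ (ru / (2 * (‖c‖ + 1))) * ‖c‖ :=
      mul_le_mul_of_nonneg_right hγru (norm_nonneg c)
    have h3 : (ru / (2 * (‖c‖ + 1))) * ‖c‖ < ru := by
      rw [div_mul_eq_mul_div, div_lt_iff₀ (by positivity)]
      nlinarith [norm_nonneg c]
    linarith
  have hdist : ‖g γ - g 0‖ < ε := by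
    have := hd (x := γ) (by rw [Real.dist_eq, sub_zero, abs_of_nonneg hγ0]; linarith)
    rwa [dist_eq_norm] at this
  have hfX : toEuclideanCLM (𝕜 := ℝ) (B + γ • C) = b + γ • c := by
    rw [_root_.map_add, _root_.map_smul, hbdef, hcdef]
  have hBCunit : IsUnit (B + γ • C) := by
    have h1 : IsUnit (toEuclideanCLM (𝕜 := ℝ) (B + γ • C)) := by rw [hfX]; exact hunit
    have h2 := h1.map (toEuclideanCLM (n := Fin M) (𝕜 := ℝ)).symm
    simpa using h2
  refine ⟨hBCunit, ?_⟩
  intro μ hμpos hμμ₀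
  have hmatmap : toEuclideanCLM (𝕜 := ℝ) (1 - μ • ((B + γ • C)⁻¹ * A)) = 1 - μ • g γ := by
    rw [_root_.map_sub, _root_.map_one, _root_.map_smul, _root_.map_mul,
      ← aux_ring_inverse_map _ hBCunit, hfX, ← hadef, ← hgapp γ]
  have hnorm : l2OpNorm (1 - μ • ((B + γ • C)⁻¹ * A)) = ‖1 - μ • g γ‖ := by
    rw [l2OpNorm, hmatmap]
  -- bounds on g γ
  have hgK : ‖g γ‖ ≤ K := by
    have h5 : ‖g γ‖ ≤ ‖g 0‖ + ‖g γ - g 0‖ := by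
      calc ‖g γ‖ = ‖g 0 + (g γ - g 0)‖ := by congr 1; abel
        _ ≤ ‖g 0‖ + ‖g γ - g 0‖ := norm_add_le _ _
    rw [hKdef]; linarith
  have hquadγ : ∀ x : EuclideanSpace ℝ (Fin M), ε * ‖x‖ ^ 2 ≤ inner ℝ x (g γ x) := by
    intro x
    obtain ⟨p, hp⟩ : ∃ p : ℝ, p = (inner ℝ x (g 0 x) : ℝ) := ⟨_, rfl⟩
    obtain ⟨q, hq⟩ : ∃ q : ℝ, q = (inner ℝ x ((g γ - g 0) x) : ℝ) := ⟨_, rfl⟩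
    have h1 : (inner ℝ x (g γ x) : ℝ) = p + q := by
      rw [hp, hq, ← inner_add_right]
      congr 1
      simp [ContinuousLinearMap.sub_apply]
    have h2 : |q| ≤ ε * ‖x‖ ^ 2 := by
      rw [hq]
      calc |(inner ℝ x ((g γ - g 0) x) : ℝ)| ≤ ‖x‖ * ‖(g γ - g 0) x‖ := abs_real_inner_le_norm _ _
        _ ≤ ‖x‖ * (‖g γ - g 0‖ * ‖x‖) := by
            apply mul_le_mul_of_nonneg_left ((g γ - g 0).le_opNorm x) (norm_nonneg x)
        _ ≤ ‖x‖ * (ε * ‖x‖) := by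
            apply mul_le_mul_of_nonneg_left
              (mul_le_mul_of_nonneg_right hdist.le (norm_nonneg x)) (norm_nonneg x)
        _ = ε * ‖x‖ ^ 2 := by ring
    have h3 : δ * ‖x‖ ^ 2 ≤ p := by rw [hp]; exact hquad0 x
    have h4 := abs_le.mp h2
    rw [h1, hεdef]
    rw [hεdef] at h4
    linarith [h4.1, h3]
  have hmain := aux_key_bound (g γ) ε K μ hεpos hεK hgK hquadγ hμpos hμμ₀
  rw [hnorm]
  refine ⟨hmain, ?_⟩
  have h6 := mul_pos hμpos (half_pos hεpos)
  linarith
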